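/- Let f₁, f₂, f₃, f₄ be the theta constants of the second kind f_a(Z) = θ[a,0](2Z) for a = (0,0), (1,0), (0,1), (1,1), define F₁ = f₁⁴+f₂⁴+f₃⁴+f₄⁴, F₂ = f₁²f₂²+f₃²f₄², F₃ = f₁²f₃²+f₂²f₄², F₄ = f₁²f₄²+f₂²f₃², F₅ = f₁f₂f₃f₄, and let F₆(Z) = θ[(0,0),(0,1)](Z)·θ[(0,0),(0,0)](Z)·θ[(0,0),(1,0)](Z)·θ[(0,0),(1,1)](Z). Then for every Z in the Siegel upper half space ℍ₂: F₆² = F₁² − 4F₂² − 4F₃² − 4F₄² + 32F₅². -/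

import Mathlib

open Matrix Complex

/-- The Siegel upper half space of genus 2: symmetric complex 2×2 matrices with
positive definite imaginary part. -/
def SiegelH2 : Set (Matrix (Fin 2) (Fin 2) ℂ) :=
  {Z | Z.IsSymm ∧ (Matrix.of fun i j => (Z i j).im).PosDef}

/-- The summand of the theta series with characteristic `(a,b)`:
`exp(πi((g+a/2)ᵀ Z (g+a/2) + bᵀ(g+a/2)))`. -/
noncomputable def thetaTerm (a b : Fin 2 → ℤ) (Z : Matrix (Fin 2) (Fin 2) ℂ)
    (g : Fin 2 → ℤ) : ℂ :=
  Complex.exp (Real.pi * Complex.I *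
    ((∑ i, ∑ j, ((g i : ℂ) + (a i : ℂ) / 2) * Z i j * ((g j : ℂ) + (a j : ℂ) / 2)) +
      ∑ i, (b i : ℂ) * ((g i : ℂ) + (a i : ℂ) / 2)))

/-- The theta constant `θ[a,b](Z) = Σ_{g∈ℤ²} exp(πi((g+a/2)ᵀ Z (g+a/2) + bᵀ(g+a/2)))`. -/
noncomputable def theta (a b : Fin 2 → ℤ) (Z : Matrix (Fin 2) (Fin 2) ℂ) : ℂ :=
  ∑' g : Fin 2 → ℤ, thetaTerm a b Z g

/-- The theta constants of the second kind `f_a(Z) = θ[a,0](2Z)`. -/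
noncomputable def thetaSecond (a : Fin 2 → ℤ) (Z : Matrix (Fin 2) (Fin 2) ℂ) : ℂ :=
  theta a 0 ((2 : ℂ) • Z)

/-- `f₁ = f_{(0,0)}`. -/
noncomputable def f₁ (Z : Matrix (Fin 2) (Fin 2) ℂ) : ℂ := thetaSecond ![0, 0] Z
/-- `f₂ = f_{(1,0)}`. -/
noncomputable def f₂ (Z : Matrix (Fin 2) (Fin 2) ℂ) : ℂ := thetaSecond ![1, 0] Z
/-- `f₃ = f_{(0,1)}`. -/
noncomputable def f₃ (Z : Matrix (Fin 2) (Fin 2) ℂ) : ℂ := thetaSecond ![0, 1] Z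
/-- `f₄ = f_{(1,1)}`. -/
noncomputable def f₄ (Z : Matrix (Fin 2) (Fin 2) ℂ) : ℂ := thetaSecond ![1, 1] Z

/-- Runge's generator `F₁ = f₁⁴+f₂⁴+f₃⁴+f₄⁴`. -/
noncomputable def F₁ (Z : Matrix (Fin 2) (Fin 2) ℂ) : ℂ :=
  f₁ Z ^ 4 + f₂ Z ^ 4 + f₃ Z ^ 4 + f₄ Z ^ 4
/-- Runge's generator `F₂ = f₁²f₂²+f₃²f₄²`. -/
noncomputable def F₂ (Z : Matrix (Fin 2) (Fin 2) ℂ) : ℂ :=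
  f₁ Z ^ 2 * f₂ Z ^ 2 + f₃ Z ^ 2 * f₄ Z ^ 2
/-- Runge's generator `F₃ = f₁²f₃²+f₂²f₄²`. -/
noncomputable def F₃ (Z : Matrix (Fin 2) (Fin 2) ℂ) : ℂ :=
  f₁ Z ^ 2 * f₃ Z ^ 2 + f₂ Z ^ 2 * f₄ Z ^ 2
/-- Runge's generator `F₄ = f₁²f₄²+f₂²f₃²`. -/
noncomputable def F₄ (Z : Matrix (Fin 2) (Fin 2) ℂ) : ℂ :=
  f₁ Z ^ 2 * f₄ Z ^ 2 + f₂ Z ^ 2 * f₃ Z ^ 2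
/-- Runge's generator `F₅ = f₁f₂f₃f₄`. -/
noncomputable def F₅ (Z : Matrix (Fin 2) (Fin 2) ℂ) : ℂ :=
  f₁ Z * f₂ Z * f₃ Z * f₄ Z

/-- `F₆ = Θ`, the product of the four theta constants of the standard syzygetic
quadruple. -/
noncomputable def F₆ (Z : Matrix (Fin 2) (Fin 2) ℂ) : ℂ :=
  theta ![0, 0] ![0, 1] Z * theta ![0, 0] ![0, 0] Z *
  theta ![0, 0] ![1, 0] Z * theta ![0, 0] ![1, 1] Z


lemma quad_lower {Y : Matrix (Fin 2) (Fin 2) ℝ} (hY : Y.PosDef) :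
    ∃ c > 0, ∀ v : Fin 2 → ℝ, c * (v 0 ^ 2 + v 1 ^ 2) ≤ ∑ i, ∑ j, v i * Y i j * v j := by
  have hsym : Y 1 0 = Y 0 1 := by simpa using hY.1.apply 0 1
  have h00 : 0 < Y 0 0 := by
    have h := hY.dotProduct_mulVec_pos (x := ![1, 0]) (by intro h; have := congrFun h 0; simp at this)
    simpa [dotProduct, Matrix.mulVec, Fin.sum_univ_two] using h
  have h11 : 0 < Y 1 1 := by
    have h := hY.dotProduct_mulVec_pos (x := ![0, 1]) (by intro h; have := congrFun h 1; simp at this)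
    simpa [dotProduct, Matrix.mulVec, Fin.sum_univ_two] using h
  have hdet : 0 < Y 0 0 * Y 1 1 - Y 0 1 * Y 0 1 := by
    have := hY.det_pos
    rw [Matrix.det_fin_two, hsym] at this
    nlinarith [this]
  refine ⟨(Y 0 0 * Y 1 1 - Y 0 1 * Y 0 1) / (Y 0 0 + Y 1 1), by positivity, fun v => ?_⟩
  rw [div_mul_eq_mul_div, div_le_iff₀ (by positivity)]
  simp only [Fin.sum_univ_two, hsym]
  have hpos : 0 < Y 0 0 ^ 2 + Y 0 1 ^ 2 := by positivity
  have h2 : 0 ≤ (Y 0 0 ^ 2 + Y 0 1 ^ 2) *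
      ((v 0 * Y 0 0 * v 0 + v 0 * Y 0 1 * v 1 + (v 1 * Y 0 1 * v 0 + v 1 * Y 1 1 * v 1)) *
        (Y 0 0 + Y 1 1) - (Y 0 0 * Y 1 1 - Y 0 1 * Y 0 1) * (v 0 ^ 2 + v 1 ^ 2)) := by
    nlinarith [sq_nonneg ((Y 0 0 ^ 2 + Y 0 1 ^ 2) * v 0 + Y 0 1 * (Y 0 0 + Y 1 1) * v 1),
      sq_nonneg ((Y 0 0 * Y 1 1 - Y 0 1 ^ 2) * v 1)]
  nlinarith [h2, hpos]

lemma summable_exp_shift (t : ℝ) (ht : 0 < t) (s : ℝ) :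
    Summable fun n : ℤ => Real.exp (-(t * ((n : ℝ) + s) ^ 2)) := by
  have key : ∀ (s : ℝ) (u : ℝ), (0 : ℝ) ≤ u → Real.exp (-(t * (u + s) ^ 2)) ≤
      Real.exp (t * (|s| + 1)) * Real.exp (u * (-t)) := by
    intro s u hu
    rw [← Real.exp_add, Real.exp_le_exp]
    nlinarith [sq_nonneg (u + s - 1/2), neg_abs_le s, abs_nonneg s, sq_nonneg (u + s)]
  have hgeo : ∀ s : ℝ, Summable fun n : ℕ =>
      Real.exp (t * (|s| + 1)) * Real.exp ((n : ℝ) * (-t)) := fun s =>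
    (Real.summable_exp_nat_mul_iff.mpr (by linarith)).mul_left _
  apply Summable.of_nat_of_neg
  · exact Summable.of_nonneg_of_le (fun n => (Real.exp_pos _).le)
      (fun n => key s n (Nat.cast_nonneg n)) (hgeo s)
  · refine Summable.of_nonneg_of_le (fun n => (Real.exp_pos _).le) (fun n => ?_) (hgeo (-s))
    have he : Real.exp (-(t * (((-(n : ℤ) : ℤ) : ℝ) + s) ^ 2)) =
        Real.exp (-(t * ((n : ℝ) + (-s)) ^ 2)) := by push_cast; ring_nf
    rw [he]
    exact key (-s) n (Nat.cast_nonneg n)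


lemma norm_thetaTerm (a b : Fin 2 → ℤ) (Z : Matrix (Fin 2) (Fin 2) ℂ) (g : Fin 2 → ℤ) :
    ‖thetaTerm a b Z g‖ = Real.exp (-(Real.pi *
      (∑ i, ∑ j, ((g i : ℝ) + (a i : ℝ) / 2) * (Z i j).im * ((g j : ℝ) + (a j : ℝ) / 2)))) := by
  rw [thetaTerm, Complex.norm_exp]
  congr 1
  have hc : ∀ i, ((g i : ℂ) + (a i : ℂ) / 2) = (((g i : ℝ) + (a i : ℝ) / 2 : ℝ) : ℂ) := by
    intro i; push_cast; ring
  simp only [hc, Fin.sum_univ_two]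
  simp [Complex.add_re, Complex.add_im, Complex.mul_re, Complex.mul_im]


lemma summable_norm_thetaTerm (a b : Fin 2 → ℤ) {Z : Matrix (Fin 2) (Fin 2) ℂ}
    (hZ : (Matrix.of fun i j => (Z i j).im).PosDef) :
    Summable fun g : Fin 2 → ℤ => ‖thetaTerm a b Z g‖ := by
  obtain ⟨c, hc, hq⟩ := quad_lower hZ
  have hA := summable_exp_shift (Real.pi * c) (by positivity) ((a 0 : ℝ) / 2)
  have hB := summable_exp_shift (Real.pi * c) (by positivity) ((a 1 : ℝ) / 2)
  have hprod := hA.mul_of_nonneg hB (fun _ => (Real.exp_pos _).le) (fun _ => (Real.exp_pos _).le)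
  have hcomp : Summable fun g : Fin 2 → ℤ =>
      Real.exp (-(Real.pi * c * (((g 0 : ℝ)) + (a 0 : ℝ) / 2) ^ 2)) *
      Real.exp (-(Real.pi * c * (((g 1 : ℝ)) + (a 1 : ℝ) / 2) ^ 2)) :=
    (Equiv.summable_iff (piFinTwoEquiv fun _ => ℤ)).mpr hprod
  refine Summable.of_nonneg_of_le (fun g => norm_nonneg _) (fun g => ?_) hcomp
  rw [norm_thetaTerm, ← Real.exp_add, Real.exp_le_exp]
  have h := hq (fun i => (g i : ℝ) + (a i : ℝ) / 2)
  simp only [Fin.sum_univ_two, Matrix.of_apply] at h ⊢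
  have hπ := Real.pi_pos
  nlinarith [mul_le_mul_of_nonneg_left h hπ.le]

lemma exp_eq_exp_shift {X Y : ℂ} (k : ℤ) (h : X = Y + (k : ℂ) * (2 * Real.pi * I)) :
    Complex.exp X = Complex.exp Y := by
  rw [h, Complex.exp_add, Complex.exp_int_mul_two_pi_mul_I, mul_one]

lemma term_mul (b : Fin 2 → ℤ) (Z : Matrix (Fin 2) (Fin 2) ℂ) (a m n : Fin 2 → ℤ) :
    thetaTerm ![0, 0] b Z (fun i => m i + n i + a i) *
      thetaTerm ![0, 0] b Z (fun i => m i - n i) =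
    Complex.exp (Real.pi * I * ((a 0 : ℂ) * (b 0 : ℂ) + (a 1 : ℂ) * (b 1 : ℂ))) *
      (thetaTerm a 0 ((2 : ℂ) • Z) m * thetaTerm a 0 ((2 : ℂ) • Z) n) := by
  simp only [thetaTerm, Fin.sum_univ_two, Matrix.cons_val_zero, Matrix.cons_val_one,
    Matrix.head_cons, Pi.zero_apply, Int.cast_zero, zero_div, add_zero, zero_mul, mul_zero,
    Matrix.smul_apply, smul_eq_mul, Int.cast_add, Int.cast_sub]
  rw [← Complex.exp_add, ← Complex.exp_add, ← Complex.exp_add]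
  exact exp_eq_exp_shift (b 0 * m 0 + b 1 * m 1) (by push_cast; ring)

lemma posdef_two {Z : Matrix (Fin 2) (Fin 2) ℂ}
    (hZ : (Matrix.of fun i j => (Z i j).im).PosDef) :
    (Matrix.of fun i j => ((((2 : ℂ) • Z)) i j).im).PosDef := by
  have  h2 : ∀ i j, (((2 : ℂ) • Z) i j).im = 2 * (Z i j).im := by
    intro i j; simp [Matrix.smul_apply]
  have hij : ∀ i j, (Z j i).im = (Z i j).im := by
    intro i j; simpa using hZ.1.apply i j
  rw [Matrix.posDef_iff_dotProduct_mulVec]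
  constructor
  · ext i j
    simp [Matrix.conjTranspose_apply, h2, hij]
  · intro x hx
    have h := hZ.dotProduct_mulVec_pos hx
    have he : star x ⬝ᵥ ((Matrix.of fun i j => (((2 : ℂ) • Z) i j).im).mulVec x) =
        2 * (star x ⬝ᵥ ((Matrix.of fun i j => ((Z i j)).im).mulVec x)) := by
      simp [dotProduct, Matrix.mulVec, Fin.sum_univ_two, h2]
      ring
    rw [he]
    positivity

def avec (q : Fin 2 × Fin 2) : Fin 2 → ℤ := ![((q.1 : ℕ) : ℤ), ((q.2 : ℕ) : ℤ)]

def Φ (w : (Fin 2 × Fin 2) × ((Fin 2 → ℤ) × (Fin 2 → ℤ))) : (Fin 2 → ℤ) × (Fin 2 → ℤ) :=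
  (fun i => w.2.1 i + w.2.2 i + avec w.1 i, fun i => w.2.1 i - w.2.2 i)

lemma Φ_bij : Function.Bijective Φ := by
  constructor
  · rintro ⟨⟨q0, q1⟩, m, n⟩ ⟨⟨q0', q1'⟩, m', n'⟩ h
    have e1 := congrFun (congrArg Prod.fst h) 0
    have e2 := congrFun (congrArg Prod.fst h) 1
    have e3 := congrFun (congrArg Prod.snd h) 0
    have e4 := congrFun (congrArg Prod.snd h) 1
    simp only [Φ, avec, Matrix.cons_val_zero, Matrix.cons_val_one, Matrix.head_cons] at e1 e2 e3 e4
    have b0 := q0.isLt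
    have b1 := q1.isLt
    have b0' := q0'.isLt
    have b1' := q1'.isLt
    have hq0 : q0 = q0' := Fin.ext (by omega)
    have hq1 : q1 = q1' := Fin.ext (by omega)
    have hm0 : m 0 = m' 0 := by omega
    have hm1 : m 1 = m' 1 := by omega
    have hn0 : n 0 = n' 0 := by omega
    have hn1 : n 1 = n' 1 := by omega
    have hm : m = m' := by funext i; fin_cases i <;> simpa
    have hn : n = n' := by funext i; fin_cases i <;> simpa
    simp [hq0, hq1, hm, hn]
  · rintro ⟨x, y⟩
    refine ⟨⟨(⟨((x 0 + y 0) % 2).toNat, by omega⟩, ⟨((x 1 + y 1) % 2).toNat, by omega⟩),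
      fun i => (x i + y i - (x i + y i) % 2) / 2, fun i => (x i - y i - (x i + y i) % 2) / 2⟩, ?_⟩
    refine Prod.ext ?_ ?_ <;> funext i <;> fin_cases i <;> simp [Φ, avec] <;> omega

lemma theta_sq (b : Fin 2 → ℤ) {Z : Matrix (Fin 2) (Fin 2) ℂ}
    (hZ : (Matrix.of fun i j => (Z i j).im).PosDef) :
    theta ![0, 0] b Z ^ 2 = ∑ q : Fin 2 × Fin 2,
      Complex.exp (Real.pi * I * ((avec q 0 : ℂ) * (b 0 : ℂ) + (avec q 1 : ℂ) * (b 1 : ℂ))) *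
        thetaSecond (avec q) Z ^ 2 := by
  have hn : Summable fun g : Fin 2 → ℤ => ‖thetaTerm ![0, 0] b Z g‖ :=
    summable_norm_thetaTerm _ _ hZ
  have hn2 : ∀ a : Fin 2 → ℤ, Summable fun g : Fin 2 → ℤ => ‖thetaTerm a 0 ((2 : ℂ) • Z) g‖ :=
    fun a => summable_norm_thetaTerm _ _ (posdef_two hZ)
  set t := thetaTerm ![0, 0] b Z with ht
  have step1 : theta ![0, 0] b Z ^ 2 = ∑' p : (Fin 2 → ℤ) × (Fin 2 → ℤ), t p.1 * t p.2 := by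
    rw [theta, sq]
    exact tsum_mul_tsum_of_summable_norm hn hn
  have hsumP : Summable fun p : (Fin 2 → ℤ) × (Fin 2 → ℤ) => t p.1 * t p.2 :=
    summable_mul_of_summable_norm hn hn
  let E := Equiv.ofBijective Φ Φ_bij
  have step2 : (∑' p : (Fin 2 → ℤ) × (Fin 2 → ℤ), t p.1 * t p.2) =
      ∑' w : (Fin 2 × Fin 2) × ((Fin 2 → ℤ) × (Fin 2 → ℤ)), t (Φ w).1 * t (Φ w).2 :=
    (E.tsum_eq fun p => t p.1 * t p.2).symm
  have step3 : ∀ w : (Fin 2 × Fin 2) × ((Fin 2 → ℤ) × (Fin 2 → ℤ)),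
      t (Φ w).1 * t (Φ w).2 =
      Complex.exp (Real.pi * I * ((avec w.1 0 : ℂ) * (b 0 : ℂ) + (avec w.1 1 : ℂ) * (b 1 : ℂ))) *
        (thetaTerm (avec w.1) 0 ((2 : ℂ) • Z) w.2.1 *
          thetaTerm (avec w.1) 0 ((2 : ℂ) • Z) w.2.2) :=
    fun w => term_mul b Z (avec w.1) w.2.1 w.2.2
  have hsumW : Summable fun w : (Fin 2 × Fin 2) × ((Fin 2 → ℤ) × (Fin 2 → ℤ)) =>
      t (Φ w).1 * t (Φ w).2 := E.summable_iff.mpr hsumP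
  rw [step1, step2, Summable.tsum_prod hsumW]
  rw [tsum_fintype]
  refine Finset.sum_congr rfl fun q _ => ?_
  have inner : (∑' mn : (Fin 2 → ℤ) × (Fin 2 → ℤ), t (Φ (q, mn)).1 * t (Φ (q, mn)).2) =
      Complex.exp (Real.pi * I * ((avec q 0 : ℂ) * (b 0 : ℂ) + (avec q 1 : ℂ) * (b 1 : ℂ))) *
        ∑' mn : (Fin 2 → ℤ) × (Fin 2 → ℤ),
          thetaTerm (avec q) 0 ((2 : ℂ) • Z) mn.1 * thetaTerm (avec q) 0 ((2 : ℂ) • Z) mn.2 := by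
    rw [← tsum_mul_left]
    exact tsum_congr fun mn => step3 (q, mn)
  rw [inner, ← tsum_mul_tsum_of_summable_norm (hn2 (avec q)) (hn2 (avec q))]
  rw [thetaSecond, theta, sq]

lemma exp_pi_I_two : Complex.exp (Real.pi * I * 2) = 1 := by
  rw [show ((Real.pi : ℂ) * I * 2 : ℂ) = 2 * Real.pi * I by ring, Complex.exp_two_pi_mul_I]

lemma theta_sq' (b : Fin 2 → ℤ) {Z : Matrix (Fin 2) (Fin 2) ℂ}
    (hZ : (Matrix.of fun i j => (Z i j).im).PosDef) :
    theta ![0, 0] b Z ^ 2 =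
      thetaSecond ![0, 0] Z ^ 2
      + Complex.exp (Real.pi * I * (b 0 : ℂ)) * thetaSecond ![1, 0] Z ^ 2
      + Complex.exp (Real.pi * I * (b 1 : ℂ)) * thetaSecond ![0, 1] Z ^ 2
      + Complex.exp (Real.pi * I * ((b 0 : ℂ) + (b 1 : ℂ))) * thetaSecond ![1, 1] Z ^ 2 := by
  have k := theta_sq b hZ
  rw [k, Fintype.sum_prod_type]
  simp only [Fin.sum_univ_two, avec, Matrix.cons_val_zero, Matrix.cons_val_one, Matrix.head_cons,
    Fin.val_zero, Fin.val_one, Nat.cast_zero, Nat.cast_one, Int.cast_zero, Int.cast_one,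
    mul_zero, zero_mul, mul_one, one_mul, add_zero, zero_add, Complex.exp_zero]
  ring

/-- The quadratic relation `F₆² = F₁² − 4F₂² − 4F₃² − 4F₄² + 32F₅²` holds at every
`Z ∈ ℍ₂`. -/
theorem stmt_14 (Z : Matrix (Fin 2) (Fin 2) ℂ) (hZ : Z ∈ SiegelH2) :
    F₆ Z ^ 2 = F₁ Z ^ 2 - 4 * F₂ Z ^ 2 - 4 * F₃ Z ^ 2 - 4 * F₄ Z ^ 2 + 32 * F₅ Z ^ 2 := by
  have hpd : (Matrix.of fun i j => (Z i j).im).PosDef := hZ.2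
  have h1 := theta_sq' ![0, 0] hpd
  have h2 := theta_sq' ![0, 1] hpd
  have h3 := theta_sq' ![1, 0] hpd
  have h4 := theta_sq' ![1, 1] hpd
  simp only [Matrix.cons_val_zero, Matrix.cons_val_one, Matrix.head_cons, Int.cast_zero,
    Int.cast_one, mul_zero, mul_one, zero_add, add_zero, Complex.exp_zero, one_mul,
    Complex.exp_pi_mul_I, one_add_one_eq_two, exp_pi_I_two, neg_one_mul] at h1 h2 h3 h4
  simp only [F₆, F₁, F₂, F₃, F₄, F₅, f₁, f₂, f₃, f₄]
  rw [mul_pow, mul_pow, mul_pow, h2, h1, h3, h4]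
  ring
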